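/- Let X be a measurable space, let c : X × X → [0, ∞] and ℓ : X → ℝ and g : X → ℝ be measurable, with ℓ integrable with respect to ν and g integrable with respect to μ, where μ and ν are probability measures on X. Let λ ≥ 0 and δ ≥ 0, and suppose γ is a coupling of μ and ν (a probability measure on X × X whose first marginal is μ and second marginal is ν) satisfying ∫ c dγ ≤ δ. If ℓ(z) ≤ g(x) + λ c(x, z) for all x, z ∈ X, then ∫ ℓ dν ≤ λδ + ∫ g dμ. -/
import Mathlib

open MeasureTheory
open scoped ENNReal

/-- weak duality for Wasserstein DRO. If `γ` is a coupling of `μ`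
and `ν` with transport cost at most `δ`, and `ℓ(z) ≤ g(x) + λ c(x,z)` pointwise
(stated in the extended nonnegative reals, with the convention `0·∞ = 0`),
then `∫ ℓ dν ≤ λδ + ∫ g dμ`. -/
theorem stmt_15 {X : Type*} [MeasurableSpace X] (μ ν : Measure X)
    [IsProbabilityMeasure μ] [IsProbabilityMeasure ν]
    (c : X × X → ℝ≥0∞) (hc : Measurable c)
    (ℓ g : X → ℝ) (hℓm : Measurable ℓ) (hgm : Measurable g)
    (hℓ : Integrable ℓ ν) (hg : Integrable g μ)
    (lam δ : ℝ) (hlam : 0 ≤ lam) (hδ : 0 ≤ δ)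
    (γ : Measure (X × X)) [IsProbabilityMeasure γ]
    (hfst : γ.fst = μ) (hsnd : γ.snd = ν)
    (hcost : ∫⁻ p, c p ∂γ ≤ ENNReal.ofReal δ)
    (hpt : ∀ x z, ENNReal.ofReal (ℓ z - g x) ≤ ENNReal.ofReal lam * c (x, z)) :
    ∫ z, ℓ z ∂ν ≤ lam * δ + ∫ x, g x ∂μ := by
  have hℓγ : Integrable (fun p : X × X => ℓ p.2) γ := by
    rw [← hsnd, Measure.snd, integrable_map_measure hℓm.aestronglyMeasurable
      measurable_snd.aemeasurable] at hℓ
    exact hℓ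
  have hgγ : Integrable (fun p : X × X => g p.1) γ := by
    rw [← hfst, Measure.fst, integrable_map_measure hgm.aestronglyMeasurable
      measurable_fst.aemeasurable] at hg
    exact hg
  have hint : ∫ z, ℓ z ∂ν - ∫ x, g x ∂μ = ∫ p, (ℓ p.2 - g p.1) ∂γ := by
    rw [integral_sub hℓγ hgγ, ← hsnd, ← hfst, Measure.snd, Measure.fst,
      integral_map measurable_snd.aemeasurable hℓm.aestronglyMeasurable,
      integral_map measurable_fst.aemeasurable hgm.aestronglyMeasurable]
  have hsub : Integrable (fun p : X × X => ℓ p.2 - g p.1) γ := hℓγ.sub hgγ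
  have hpos : Integrable (fun p : X × X => max (ℓ p.2 - g p.1) 0) γ := hsub.pos_part
  have h1 : ∫ p, (ℓ p.2 - g p.1) ∂γ ≤ ∫ p, max (ℓ p.2 - g p.1) 0 ∂γ :=
    integral_mono hsub hpos fun p => le_max_left _ _
  have h2 : ENNReal.ofReal (∫ p, max (ℓ p.2 - g p.1) 0 ∂γ)
      = ∫⁻ p, ENNReal.ofReal (ℓ p.2 - g p.1) ∂γ := by
    rw [ofReal_integral_eq_lintegral_ofReal hpos
      (Filter.Eventually.of_forall fun p => le_max_right _ _)]
    congr 1; funext p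
    rw [show ENNReal.ofReal (max (ℓ p.2 - g p.1) 0) = ENNReal.ofReal (ℓ p.2 - g p.1) from
      by
        rcases le_or_gt 0 (ℓ p.2 - g p.1) with h | h
        · rw [max_eq_left h]
        · rw [max_eq_right h.le, ENNReal.ofReal_zero, ENNReal.ofReal_of_nonpos h.le]]
  have h3 : ∫⁻ p, ENNReal.ofReal (ℓ p.2 - g p.1) ∂γ ≤ ENNReal.ofReal (lam * δ) := by
    calc ∫⁻ p, ENNReal.ofReal (ℓ p.2 - g p.1) ∂γ
        ≤ ∫⁻ p, ENNReal.ofReal lam * c p ∂γ :=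
          lintegral_mono fun p => hpt p.1 p.2
      _ = ENNReal.ofReal lam * ∫⁻ p, c p ∂γ := lintegral_const_mul _ hc
      _ ≤ ENNReal.ofReal lam * ENNReal.ofReal δ := mul_le_mul_right hcost _
      _ = ENNReal.ofReal (lam * δ) := (ENNReal.ofReal_mul hlam).symm
  have h4 : ∫ p, max (ℓ p.2 - g p.1) 0 ∂γ ≤ lam * δ := by
    have := h2 ▸ h3
    rwa [ENNReal.ofReal_le_ofReal_iff (mul_nonneg hlam hδ)] at this
  linarith [hint ▸ (h1.trans h4)]
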